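/- (Theorem 3.1, linear convergence) Let P : ℝ^{n1×n2×n3} → ℝ^{n1×n2×n3} be an orthogonal projection with respect to the Frobenius inner product, let Y ∈ ℝ^{n1×n2×n3}, and let (R_k)_{k≥1} be a sequence of tensors such that: R_1 = P(Y); P(R_k) = R_k for all k ≥ 1; and for each k ≥ 1, either R_k = 0 and R_{k+1} = 0, or R_k ≠ 0 and ‖R_{k+1}‖_F ≤ inf_{θ∈ℝ} ‖R_k − θ·P(M_k)‖_F, where M_k is the normalized leading rank-one tensor of some ordered t-SVD of R_k. Then for all k ≥ 1, ‖R_k‖_F ≤ (√(1 − 1/min(n1,n2)))^{k−1} · ‖P(Y)‖_F. -/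

import Mathlib

open scoped BigOperators Matrix Kronecker ComplexConjugate
open Complex

/-- A third-order tensor of size `n1 × n2 × n3` with entries in `R`. -/
abbrev T3 (n1 n2 n3 : ℕ) (R : Type*) : Type _ := Fin n1 → Fin n2 → Fin n3 → R

namespace T3

variable {n1 n2 n3 l : ℕ}

/-- The Frobenius inner product `⟨A,B⟩ = Σ_{i,j,k} A_{ijk} B_{ijk}`. -/
def tInner (A B : T3 n1 n2 n3 ℝ) : ℝ := ∑ i, ∑ j, ∑ k, A i j k * B i j k

/-- The Frobenius norm `‖A‖_F = √⟨A,A⟩`. -/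
noncomputable def tNorm (A : T3 n1 n2 n3 ℝ) : ℝ := Real.sqrt (tInner A A)

/-- The `n × n` DFT matrix, `(F_n)_{ab} = ω^{ab}` (0-based), `ω = exp(-2πi/n)`. -/
noncomputable def dftMatrix (n : ℕ) : Matrix (Fin n) (Fin n) ℂ :=
  fun a b => Complex.exp (-(2 * (Real.pi : ℂ) * Complex.I) / (n : ℂ)) ^ ((a : ℕ) * (b : ℕ))

/-- The `k`-th frontal slice `Â^{(k)}` of the DFT of `A` along the third dimension:
`Â(i,j,:) = F_{n3} · A(i,j,:)`. -/
noncomputable def hatSlice (A : T3 n1 n2 n3 ℝ) (k : Fin n3) : Matrix (Fin n1) (Fin n2) ℂ :=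
  fun i j => ∑ m : Fin n3, dftMatrix n3 k m * (A i j m : ℂ)

/-- The block circulant matrix of `A`: the `(p,q)` block (0-based) is the frontal
slice `A^{(p-q mod n3)}`. -/
def bcirc (A : T3 n1 n2 n3 ℝ) : Matrix (Fin n3 × Fin n1) (Fin n3 × Fin n2) ℝ :=
  fun p q => A p.2 q.2 (p.1 - q.1)

/-- The block diagonal matrix with diagonal blocks `Â^{(1)}, …, Â^{(n3)}`. -/
noncomputable def bdiag (A : T3 n1 n2 n3 ℝ) : Matrix (Fin n3 × Fin n1) (Fin n3 × Fin n2) ℂ :=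
  fun p q => if p.1 = q.1 then hatSlice A p.1 p.2 q.2 else 0

/-- t-product: `(A*B)^{(k)} = Σ_q A^{(k-q mod n3)} B^{(q)}` (circular convolution of slices). -/
def tprod (A : T3 n1 n2 n3 ℝ) (B : T3 n2 l n3 ℝ) : T3 n1 l n3 ℝ :=
  fun i j k => ∑ q : Fin n3, ∑ p : Fin n2, A i p (k - q) * B p j q

/-- Tensor transpose: `(Aᵀ)^{(k)} = (A^{(-k mod n3)})ᵀ`. -/
def tT (A : T3 n1 n2 n3 ℝ) : T3 n2 n1 n3 ℝ := fun j i k => A i j (-k)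

/-- The identity tensor: first frontal slice the identity matrix, other slices zero. -/
def tI (q m : ℕ) : T3 q q m ℝ := fun i j k => if i = j ∧ (k : ℕ) = 0 then 1 else 0

/-- An orthogonal tensor: `Qᵀ * Q = Q * Qᵀ = I`. -/
def TOrth {n m : ℕ} (Q : T3 n n m ℝ) : Prop :=
  tprod (tT Q) Q = tI n m ∧ tprod Q (tT Q) = tI n m

/-- A partially orthogonal tensor: `Qᵀ * Q = I`. -/
def PartOrth {n q m : ℕ} (Q : T3 n q m ℝ) : Prop := tprod (tT Q) Q = tI q m

/-- f-diagonal tensor: every frontal slice is a diagonal matrix. -/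
def FDiag (S : T3 n1 n2 n3 ℝ) : Prop :=
  ∀ (i : Fin n1) (j : Fin n2) (k : Fin n3), (i : ℕ) ≠ (j : ℕ) → S i j k = 0

/-- Every Fourier-domain frontal slice of `S` has real, nonnegative, nonincreasing
diagonal entries. -/
def OrderedDiag (S : T3 n1 n2 n3 ℝ) : Prop :=
  ∀ k : Fin n3,
    (∀ (i : Fin n1) (j : Fin n2), (i : ℕ) = (j : ℕ) →
      (hatSlice S k i j).im = 0 ∧ 0 ≤ (hatSlice S k i j).re) ∧
    (∀ (i i' : Fin n1) (j j' : Fin n2), (i : ℕ) = (j : ℕ) → (i' : ℕ) = (j' : ℕ) →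
      (i : ℕ) ≤ (i' : ℕ) → (hatSlice S k i' j').re ≤ (hatSlice S k i j).re)

/-- A t-SVD of `A`: `A = U * S * Vᵀ` with `U, V` orthogonal and `S` f-diagonal. -/
def IsTSVD (A : T3 n1 n2 n3 ℝ) (U : T3 n1 n1 n3 ℝ) (S : T3 n1 n2 n3 ℝ)
    (V : T3 n2 n2 n3 ℝ) : Prop :=
  TOrth U ∧ TOrth V ∧ FDiag S ∧ A = tprod (tprod U S) (tT V)

/-- An ordered t-SVD. -/
def IsOrderedTSVD (A : T3 n1 n2 n3 ℝ) (U : T3 n1 n1 n3 ℝ) (S : T3 n1 n2 n3 ℝ)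
    (V : T3 n2 n2 n3 ℝ) : Prop :=
  IsTSVD A U S V ∧ OrderedDiag S

/-- Lateral slice `U(:,i,:)` as an `n1 × 1 × n3` tensor. -/
def lat (U : T3 n1 n2 n3 ℝ) (i : Fin n2) : T3 n1 1 n3 ℝ := fun a _ k => U a i k

/-- Tube `S(i,j,:)` as a `1 × 1 × n3` tensor. -/
def tube (S : T3 n1 n2 n3 ℝ) (i : Fin n1) (j : Fin n2) : T3 1 1 n3 ℝ := fun _ _ k => S i j k

/-- The rank-one term `U(:,i,:) * S(i,j,:) * V(:,j,:)ᵀ`. -/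
def rankOne (U : T3 n1 n1 n3 ℝ) (S : T3 n1 n2 n3 ℝ) (V : T3 n2 n2 n3 ℝ)
    (i : Fin n1) (j : Fin n2) : T3 n1 n2 n3 ℝ :=
  tprod (tprod (lat U i) (tube S i j)) (tT (lat V j))

/-- The normalized leading rank-one tensor
`M₁ = U(:,1,:) * (S(1,1,:)/‖S(1,1,:)‖_F) * V(:,1,:)ᵀ`. -/
noncomputable def leadM (hn1 : 0 < n1) (hn2 : 0 < n2) (U : T3 n1 n1 n3 ℝ)
    (S : T3 n1 n2 n3 ℝ) (V : T3 n2 n2 n3 ℝ) : T3 n1 n2 n3 ℝ :=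
  tprod (tprod (lat U ⟨0, hn1⟩)
      (fun _ _ k => S ⟨0, hn1⟩ ⟨0, hn2⟩ k / tNorm (tube S ⟨0, hn1⟩ ⟨0, hn2⟩)))
    (tT (lat V ⟨0, hn2⟩))

/-- `‖Y‖_{1,F}`: the maximal Euclidean norm of a column fiber of a frontal slice of `Ŷ`. -/
noncomputable def norm1F (Y : T3 n1 n2 n3 ℝ) : ℝ :=
  ⨆ p : Fin n2 × Fin n3, Real.sqrt (∑ i, ‖hatSlice Y p.2 i p.1‖ ^ 2)

/-- The tubal rank: the maximal rank of a frontal slice of the third-mode DFT. -/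
noncomputable def tubalRank (X : T3 n1 n2 n3 ℝ) : ℕ :=
  Finset.univ.sup fun k : Fin n3 => (hatSlice X k).rank

end T3

open T3

noncomputable def zet (n : ℕ) : ℂ := Complex.exp (-(2 * (Real.pi : ℂ) * Complex.I) / n)

lemma zet_ne_zero (n : ℕ) : zet n ≠ 0 := Complex.exp_ne_zero _

lemma zet_pow_self {n : ℕ} (hn : 0 < n) : zet n ^ (n : ℤ) = 1 := by
  have hn' : (n : ℂ) ≠ 0 := Nat.cast_ne_zero.2 hn.ne'
  rw [zet, ← Complex.exp_int_mul]
  have : (n : ℤ) * (-(2 * (Real.pi : ℂ) * Complex.I) / n) = -(2 * (Real.pi : ℂ) * Complex.I) := by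
    push_cast; field_simp
  rw [this, Complex.exp_neg, Complex.exp_two_pi_mul_I, inv_one]

lemma zet_zpow_emod {n : ℕ} (hn : 0 < n) (a : ℤ) : zet n ^ a = zet n ^ (a % n) := by
  conv_lhs => rw [← Int.emod_add_mul_ediv a n]
  rw [zpow_add₀ (zet_ne_zero n), zpow_mul, zet_pow_self hn, one_zpow, mul_one]

lemma zet_congr {n : ℕ} (hn : 0 < n) {a b : ℤ} (h : a ≡ b [ZMOD n]) : zet n ^ a = zet n ^ b := by
  rw [zet_zpow_emod hn a, zet_zpow_emod hn b, h]

lemma conj_zet (n : ℕ) : conj (zet n) = (zet n)⁻¹ := by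
  rw [zet, ← Complex.exp_conj, ← Complex.exp_neg]
  congr 1
  simp only [map_div₀, map_neg, map_mul, Complex.conj_I, Complex.conj_ofReal, map_ofNat,
    Complex.conj_natCast]
  ring

lemma conj_zet_zpow (n : ℕ) (a : ℤ) : conj (zet n ^ a) = zet n ^ (-a) := by
  rw [map_zpow₀, conj_zet, inv_zpow, ← zpow_neg]

lemma zet_zpow_eq_one_iff {n : ℕ} (hn : 0 < n) (d : ℤ) : zet n ^ d = 1 ↔ (n : ℤ) ∣ d := by
  have hn' : (n : ℂ) ≠ 0 := Nat.cast_ne_zero.2 hn.ne'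
  have h2 : (2 * (Real.pi : ℂ) * Complex.I) ≠ 0 := by
    simp [Real.pi_ne_zero, Complex.I_ne_zero, Complex.ofReal_ne_zero]
  constructor
  · intro h
    rw [zet, ← Complex.exp_int_mul, Complex.exp_eq_one_iff] at h
    obtain ⟨m, hm⟩ := h
    have hd : (d : ℂ) = -(m * n) := by
      field_simp at hm
      have h3 : (-(d : ℂ)) * (2 * (Real.pi : ℂ) * Complex.I)
          = ((m : ℂ) * n) * (2 * (Real.pi : ℂ) * Complex.I) := by linear_combination (2 * (Real.pi : ℂ) * Complex.I) * hm
      have h4 := mul_right_cancel₀ h2 h3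
      linear_combination -h4
    have hdz : d = -(m * n) := by exact_mod_cast hd
    exact ⟨-m, by rw [hdz]; ring⟩
  · rintro ⟨t, rfl⟩
    rw [zpow_mul, zet_pow_self hn, one_zpow]

lemma sum_zet {n : ℕ} (hn : 0 < n) (d : ℤ) :
    ∑ k : Fin n, zet n ^ ((k : ℤ) * d) = if (n : ℤ) ∣ d then (n : ℂ) else 0 := by
  have hw : ∀ k : Fin n, zet n ^ ((k : ℤ) * d) = (zet n ^ d) ^ (k : ℕ) := by
    intro k
    rw [mul_comm, zpow_mul, ← zpow_natCast]
  rw [Finset.sum_congr rfl fun k _ => hw k,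
    Fin.sum_univ_eq_sum_range (fun i => (zet n ^ d) ^ i) n]
  by_cases hd : (n : ℤ) ∣ d
  · rw [if_pos hd, (zet_zpow_eq_one_iff hn d).2 hd]
    simp
  · have hne : zet n ^ d ≠ 1 := fun h => hd ((zet_zpow_eq_one_iff hn d).1 h)
    have hpow : (zet n ^ d) ^ n = 1 := by
      rw [← zpow_natCast, ← zpow_mul, mul_comm, zpow_mul, zet_pow_self hn, one_zpow]
    rw [if_neg hd, geom_sum_eq hne, hpow, sub_self, zero_div]

namespace T3Aux

open Matrix
variable {n1 n2 n3 l a b : ℕ}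

lemma hatSlice_apply (A : T3 n1 n2 n3 ℝ) (k : Fin n3) (i : Fin n1) (j : Fin n2) :
    hatSlice A k i j = ∑ m : Fin n3, zet n3 ^ ((k : ℤ) * (m : ℤ)) * (A i j m : ℂ) := by
  unfold hatSlice dftMatrix
  refine Finset.sum_congr rfl fun m _ => ?_
  rw [← zet, ← zpow_natCast]
  push_cast
  ring_nf

/-- orthogonality collapse -/
lemma sum_zet_fin {n : ℕ} (hn : 0 < n) (m m' : Fin n) :
    ∑ k : Fin n, zet n ^ ((k : ℤ) * ((m : ℤ) - (m' : ℤ))) = if m' = m then (n : ℂ) else 0 := by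
  rw [sum_zet hn]
  congr 1
  simp only [eq_iff_iff]
  constructor
  · intro h
    have h0 : (m : ℤ) - (m' : ℤ) = 0 := by
      refine Int.eq_zero_of_abs_lt_dvd h ?_
      have h1 : (m : ℤ) < n := by exact_mod_cast m.2
      have h2 : (m' : ℤ) < n := by exact_mod_cast m'.2
      have h3 : 0 ≤ (m : ℤ) := by positivity
      have h4 : 0 ≤ (m' : ℤ) := by positivity
      rw [abs_lt]; omega
    have : (m : ℕ) = (m' : ℕ) := by omega
    exact (Fin.ext this).symm
  · rintro rfl; simp

/-- Parseval, complex matrix form. -/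
lemma parseval (hn3 : 0 < n3) (A B : T3 n1 n2 n3 ℝ) :
    ∑ k : Fin n3, (hatSlice A k * (hatSlice B k)ᴴ).trace = (n3 : ℂ) * (tInner A B : ℝ) := by
  have tr : ∀ k, (hatSlice A k * (hatSlice B k)ᴴ).trace
      = ∑ i, ∑ j, hatSlice A k i j * conj (hatSlice B k i j) := by
    intro k
    simp [Matrix.trace, Matrix.mul_apply, Matrix.diag, Matrix.conjTranspose_apply]
  calc ∑ k : Fin n3, (hatSlice A k * (hatSlice B k)ᴴ).trace
      = ∑ i, ∑ j, ∑ k : Fin n3, hatSlice A k i j * conj (hatSlice B k i j) := by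
        rw [Finset.sum_congr rfl fun k _ => tr k]
        rw [Finset.sum_comm]
        exact Finset.sum_congr rfl fun i _ => Finset.sum_comm
    _ = ∑ i, ∑ j, (n3 : ℂ) * ∑ m, (A i j m : ℂ) * (B i j m : ℂ) := by
        refine Finset.sum_congr rfl fun i _ => Finset.sum_congr rfl fun j _ => ?_
        calc ∑ k : Fin n3, hatSlice A k i j * conj (hatSlice B k i j)
            = ∑ k : Fin n3, ∑ m : Fin n3, ∑ m' : Fin n3,
                zet n3 ^ ((k : ℤ) * (m : ℤ) + -((k : ℤ) * (m' : ℤ)))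
                  * ((A i j m : ℂ) * (B i j m' : ℂ)) := by
              refine Finset.sum_congr rfl fun k _ => ?_
              rw [hatSlice_apply, hatSlice_apply, map_sum, Finset.sum_mul_sum]
              refine Finset.sum_congr rfl fun m _ => Finset.sum_congr rfl fun m' _ => ?_
              rw [_root_.map_mul, conj_zet_zpow, Complex.conj_ofReal,
                zpow_add₀ (zet_ne_zero n3)]
              ring
          _ = ∑ m : Fin n3, ∑ m' : Fin n3, (∑ k : Fin n3, zet n3 ^ ((k : ℤ) * ((m : ℤ) - (m' : ℤ))))
                * ((A i j m : ℂ) * (B i j m' : ℂ)) := by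
              rw [Finset.sum_comm]
              refine Finset.sum_congr rfl fun m _ => ?_
              rw [Finset.sum_comm]
              refine Finset.sum_congr rfl fun m' _ => ?_
              rw [Finset.sum_mul]
              refine Finset.sum_congr rfl fun k _ => ?_
              congr 2
              ring
          _ = (n3 : ℂ) * ∑ m, (A i j m : ℂ) * (B i j m : ℂ) := by
              rw [Finset.mul_sum]
              refine Finset.sum_congr rfl fun m _ => ?_
              rw [Finset.sum_congr rfl fun m' (_ : m' ∈ (Finset.univ : Finset (Fin n3))) => by
                rw [sum_zet_fin hn3 m m']]
              simp [ite_mul]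
    _ = (n3 : ℂ) * (tInner A B : ℝ) := by
        rw [tInner]
        push_cast
        rw [Finset.mul_sum]
        refine Finset.sum_congr rfl fun i _ => ?_
        rw [Finset.mul_sum]

end T3Aux

namespace T3Aux2
open Matrix T3Aux
variable {n1 n2 n3 l a : ℕ}

lemma fin_add_cast (hn3 : 0 < n3) (r q : Fin n3) :
    haveI : NeZero n3 := ⟨hn3.ne'⟩
    (((r + q : Fin n3) : ℕ) : ℤ) ≡ (r : ℤ) + (q : ℤ) [ZMOD (n3 : ℤ)] := by
  haveI : NeZero n3 := ⟨hn3.ne'⟩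
  have h : ((r + q : Fin n3) : ℕ) = ((r : ℕ) + (q : ℕ)) % n3 := Fin.val_add r q
  rw [Int.ModEq, h]
  push_cast [Int.natCast_mod]
  rw [Int.emod_emod_of_dvd _ dvd_rfl]

lemma hatSlice_tprod (hn3 : 0 < n3) (A : T3 n1 n2 n3 ℝ) (B : T3 n2 l n3 ℝ) (k : Fin n3) :
    hatSlice (tprod A B) k = hatSlice A k * hatSlice B k := by
  haveI : NeZero n3 := ⟨hn3.ne'⟩
  ext i j
  have lhs : (hatSlice (tprod A B) k) i j
      = ∑ q : Fin n3, ∑ p : Fin n2, ∑ m : Fin n3,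
          zet n3 ^ ((k : ℤ) * (m : ℤ)) * ((A i p (m - q) : ℂ) * (B p j q : ℂ)) := by
    rw [hatSlice_apply]
    unfold T3.tprod
    push_cast
    trans (∑ m : Fin n3, ∑ q : Fin n3, ∑ p : Fin n2,
      zet n3 ^ ((k : ℤ) * (m : ℤ)) * ((A i p (m - q) : ℂ) * (B p j q : ℂ)))
    · refine Finset.sum_congr rfl fun m _ => ?_
      rw [Finset.mul_sum]
      refine Finset.sum_congr rfl fun q _ => ?_
      rw [Finset.mul_sum]
    · rw [Finset.sum_comm]
      exact Finset.sum_congr rfl fun q _ => Finset.sum_comm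
  have inner : ∀ (q : Fin n3) (p : Fin n2),
      (∑ m : Fin n3, zet n3 ^ ((k : ℤ) * (m : ℤ)) * ((A i p (m - q) : ℂ) * (B p j q : ℂ)))
      = (∑ r : Fin n3, zet n3 ^ ((k : ℤ) * (r : ℤ)) * (A i p r : ℂ))
        * (zet n3 ^ ((k : ℤ) * (q : ℤ)) * (B p j q : ℂ)) := by
    intro q p
    rw [← Equiv.sum_comp (Equiv.addRight q)
      (fun m => zet n3 ^ ((k : ℤ) * (m : ℤ)) * ((A i p (m - q) : ℂ) * (B p j q : ℂ)))]
    rw [Finset.sum_mul]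
    refine Finset.sum_congr rfl fun r _ => ?_
    have happ : (Equiv.addRight q) r = r + q := rfl
    rw [happ]
    have hsub : r + q - q = r := by
      rw [sub_eq_iff_eq_add]
    have hz : zet n3 ^ ((k : ℤ) * (((r + q : Fin n3) : ℕ) : ℤ))
        = zet n3 ^ ((k : ℤ) * (r : ℤ)) * zet n3 ^ ((k : ℤ) * (q : ℤ)) := by
      rw [zet_congr hn3 (Int.ModEq.mul_left _ (fin_add_cast hn3 r q)), mul_add,
        zpow_add₀ (zet_ne_zero n3)]
    rw [hsub, hz]
    ring
  rw [lhs, Matrix.mul_apply]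
  rw [Finset.sum_congr rfl fun q (_ : q ∈ (Finset.univ : Finset (Fin n3))) =>
    Finset.sum_congr rfl fun p _ => inner q p]
  rw [Finset.sum_comm]
  refine Finset.sum_congr rfl fun p _ => ?_
  rw [hatSlice_apply, hatSlice_apply, Finset.mul_sum]

lemma fin_neg_cast (hn3 : 0 < n3) (m : Fin n3) :
    haveI : NeZero n3 := ⟨hn3.ne'⟩
    (((-m : Fin n3) : ℕ) : ℤ) ≡ -(m : ℤ) [ZMOD (n3 : ℤ)] := by
  haveI : NeZero n3 := ⟨hn3.ne'⟩
  have h : ((m + (-m) : Fin n3) : ℕ) = ((m : ℕ) + ((-m : Fin n3) : ℕ)) % n3 := Fin.val_add _ _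
  rw [add_neg_cancel] at h
  have h0 : ((0 : Fin n3) : ℕ) = 0 := by
    simp
  rw [h0] at h
  have hdvd : (n3 : ℤ) ∣ (((m : ℕ) : ℤ) + (((-m : Fin n3) : ℕ) : ℤ)) := by
    have hd := Nat.dvd_of_mod_eq_zero h.symm
    exact_mod_cast Int.natCast_dvd_natCast.2 hd
  refine Int.ModEq.symm (Int.modEq_iff_dvd.2 ?_)
  have heq : (((-m : Fin n3) : ℕ) : ℤ) - (-((m : ℕ) : ℤ))
      = (((m : ℕ) : ℤ) + (((-m : Fin n3) : ℕ) : ℤ)) := by ring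
  rw [heq]
  exact hdvd

lemma hatSlice_tT (hn3 : 0 < n3) (A : T3 n1 n2 n3 ℝ) (k : Fin n3) :
    hatSlice (tT A) k = (hatSlice A k)ᴴ := by
  haveI : NeZero n3 := ⟨hn3.ne'⟩
  ext j i
  rw [Matrix.conjTranspose_apply, hatSlice_apply, hatSlice_apply, ← starRingEnd_apply, map_sum]
  unfold T3.tT
  rw [← Equiv.sum_comp (Equiv.neg (Fin n3))
    (fun m => zet n3 ^ ((k : ℤ) * (m : ℤ)) * (A i j (-m) : ℂ))]
  refine Finset.sum_congr rfl fun m _ => ?_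
  have happ : (Equiv.neg (Fin n3)) m = -m := rfl
  rw [happ, neg_neg]
  rw [_root_.map_mul, conj_zet_zpow, Complex.conj_ofReal]
  congr 1
  rw [zet_congr hn3 (Int.ModEq.mul_left (k : ℤ) (fin_neg_cast hn3 m))]
  congr 1
  ring

lemma hatSlice_tI (hn3 : 0 < n3) (q : ℕ) (k : Fin n3) :
    hatSlice (tI q n3) k = (1 : Matrix (Fin q) (Fin q) ℂ) := by
  haveI : NeZero n3 := ⟨hn3.ne'⟩
  ext i j
  rw [hatSlice_apply, Matrix.one_apply]
  unfold T3.tI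
  by_cases hij : i = j
  · subst hij
    rw [if_pos rfl]
    have key : ∀ m : Fin n3, zet n3 ^ ((k : ℤ) * (m : ℤ))
        * (((if i = i ∧ (m : ℕ) = 0 then (1:ℝ) else 0) : ℝ) : ℂ)
        = if m = (0 : Fin n3) then 1 else 0 := by
      intro m
      by_cases hm : m = 0
      · subst hm
        simp
      · have hv : ¬((m : ℕ) = 0) := fun h => hm (Fin.ext (by simpa using h))
        simp [hv, hm]
    rw [Finset.sum_congr rfl fun m _ => key m]
    simp
  · rw [if_neg hij]
    have key : ∀ m : Fin n3, zet n3 ^ ((k : ℤ) * (m : ℤ))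
        * (((if i = j ∧ (m : ℕ) = 0 then (1:ℝ) else 0) : ℝ) : ℂ) = 0 := by
      intro m; simp [hij]
    rw [Finset.sum_congr rfl fun m _ => key m]
    simp

end T3Aux2

namespace T3Aux3
open Matrix T3Aux T3Aux2
variable {n1 n2 n3 : ℕ}

lemma tInner_eq_sum (A B : T3 n1 n2 n3 ℝ) :
    tInner A B = ∑ x : Fin n1 × Fin n2 × Fin n3, A x.1 x.2.1 x.2.2 * B x.1 x.2.1 x.2.2 := by
  rw [tInner, Fintype.sum_prod_type]
  exact Finset.sum_congr rfl fun i _ => by rw [Fintype.sum_prod_type]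

lemma tInner_self_nonneg (A : T3 n1 n2 n3 ℝ) : 0 ≤ tInner A A := by
  rw [tInner_eq_sum]
  exact Finset.sum_nonneg fun x _ => mul_self_nonneg _

lemma tNorm_nonneg (A : T3 n1 n2 n3 ℝ) : 0 ≤ tNorm A := Real.sqrt_nonneg _

lemma tNorm_sq (A : T3 n1 n2 n3 ℝ) : tNorm A ^ 2 = tInner A A :=
  Real.sq_sqrt (tInner_self_nonneg A)

lemma eq_zero_of_tInner_self (A : T3 n1 n2 n3 ℝ) (h : tInner A A = 0) : A = 0 := by
  rw [tInner_eq_sum] at h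
  have hz := (Finset.sum_eq_zero_iff_of_nonneg
    (fun x (_ : x ∈ Finset.univ) => mul_self_nonneg (A x.1 x.2.1 x.2.2))).1 h
  funext i j m
  have := hz (i, j, m) (Finset.mem_univ _)
  simp only [Pi.zero_apply]
  nlinarith [this]

lemma tNorm_zero : tNorm (0 : T3 n1 n2 n3 ℝ) = 0 := by
  have : tInner (0 : T3 n1 n2 n3 ℝ) 0 = 0 := by
    rw [tInner_eq_sum]; simp
  rw [tNorm, this, Real.sqrt_zero]

lemma tInner_comm (A B : T3 n1 n2 n3 ℝ) : tInner A B = tInner B A := by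
  rw [tInner_eq_sum, tInner_eq_sum]
  exact Finset.sum_congr rfl fun x _ => mul_comm _ _

lemma tInner_expand (A B : T3 n1 n2 n3 ℝ) (θ : ℝ) :
    tInner (A - θ • B) (A - θ • B)
      = tInner A A - 2 * θ * tInner A B + θ ^ 2 * tInner B B := by
  simp only [tInner_eq_sum, Pi.sub_apply, Pi.smul_apply, smul_eq_mul]
  trans (∑ x : Fin n1 × Fin n2 × Fin n3,
    (A x.1 x.2.1 x.2.2 * A x.1 x.2.1 x.2.2
      - 2 * θ * (A x.1 x.2.1 x.2.2 * B x.1 x.2.1 x.2.2)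
      + θ ^ 2 * (B x.1 x.2.1 x.2.2 * B x.1 x.2.1 x.2.2)))
  · exact Finset.sum_congr rfl fun x _ => by ring
  · rw [Finset.sum_add_distrib, Finset.sum_sub_distrib, ← Finset.mul_sum, ← Finset.mul_sum]

lemma tInner_cauchy (A B : T3 n1 n2 n3 ℝ) : tInner A B ≤ tNorm A * tNorm B := by
  have h := Finset.sum_mul_sq_le_sq_mul_sq Finset.univ
    (fun x : Fin n1 × Fin n2 × Fin n3 => A x.1 x.2.1 x.2.2)
    (fun x : Fin n1 × Fin n2 × Fin n3 => B x.1 x.2.1 x.2.2)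
  have hAB : tInner A B ^ 2 ≤ tInner A A * tInner B B := by
    rw [tInner_eq_sum, tInner_eq_sum, tInner_eq_sum]
    calc (∑ x : Fin n1 × Fin n2 × Fin n3, A x.1 x.2.1 x.2.2 * B x.1 x.2.1 x.2.2) ^ 2
        ≤ (∑ x : Fin n1 × Fin n2 × Fin n3, A x.1 x.2.1 x.2.2 ^ 2)
          * (∑ x : Fin n1 × Fin n2 × Fin n3, B x.1 x.2.1 x.2.2 ^ 2) := h
      _ = _ := by
          congr 1 <;> exact Finset.sum_congr rfl fun x _ => (sq _)
  calc tInner A B ≤ |tInner A B| := le_abs_self _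
    _ = Real.sqrt (tInner A B ^ 2) := (Real.sqrt_sq_eq_abs _).symm
    _ ≤ Real.sqrt (tInner A A * tInner B B) := Real.sqrt_le_sqrt hAB
    _ = tNorm A * tNorm B := by
        rw [Real.sqrt_mul (tInner_self_nonneg A), tNorm, tNorm]

end T3Aux3

namespace T3Key
open Matrix T3Aux T3Aux2 T3Aux3
variable {n1 n2 n3 a b : ℕ}

def E (n : ℕ) (i0 : Fin n) : Matrix (Fin n) (Fin 1) ℂ := fun i _ => if i = i0 then 1 else 0

lemma E_conjTranspose_E (n : ℕ) (i0 : Fin n) : (E n i0)ᴴ * E n i0 = 1 := by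
  ext u v
  have huv : u = v := Subsingleton.elim u v
  subst huv
  simp [E, Matrix.mul_apply, Matrix.conjTranspose_apply, Matrix.one_apply, apply_ite,
    ite_mul, Finset.sum_ite_eq']

lemma trace_fin1 (X : Matrix (Fin 1) (Fin 1) ℂ) : X.trace = X 0 0 := by
  simp [Matrix.trace, Matrix.diag]

lemma trace_unitary_conj {n : ℕ} (W : Matrix (Fin n) (Fin n) ℂ) (hW : Wᴴ * W = 1)
    (X : Matrix (Fin n) (Fin n) ℂ) : (W * X * Wᴴ).trace = X.trace := by
  rw [Matrix.trace_mul_comm, ← Matrix.mul_assoc, hW, Matrix.one_mul]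

lemma trace_mul_conjTranspose (A B : Matrix (Fin a) (Fin b) ℂ) :
    (A * Bᴴ).trace = ∑ i, ∑ j, A i j * conj (B i j) := by
  simp [Matrix.trace, Matrix.mul_apply, Matrix.diag, Matrix.conjTranspose_apply]

lemma entry_EXE {n m : ℕ} (i0 : Fin n) (j0 : Fin m) (X : Matrix (Fin n) (Fin m) ℂ) :
    ((E n i0)ᴴ * (X * E m j0)) 0 0 = X i0 j0 := by
  simp [E, Matrix.mul_apply, Matrix.conjTranspose_apply, apply_ite, ite_mul, mul_ite,
    Finset.sum_ite_eq', Finset.sum_ite_eq]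

lemma unitary_of_TOrth {n : ℕ} (hn3 : 0 < n3) {Q : T3 n n n3 ℝ} (h : TOrth Q) (k : Fin n3) :
    (hatSlice Q k)ᴴ * hatSlice Q k = 1 ∧ hatSlice Q k * (hatSlice Q k)ᴴ = 1 := by
  constructor
  · have h1 : hatSlice (tprod (tT Q) Q) k = hatSlice (tI n n3) k := by rw [h.1]
    rw [hatSlice_tprod hn3, hatSlice_tT hn3, hatSlice_tI hn3] at h1
    exact h1
  · have h1 : hatSlice (tprod Q (tT Q)) k = hatSlice (tI n n3) k := by rw [h.2]
    rw [hatSlice_tprod hn3, hatSlice_tT hn3, hatSlice_tI hn3] at h1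
    exact h1

lemma hat_lat (W : T3 a b n3 ℝ) (i0 : Fin b) (k : Fin n3) :
    hatSlice (lat W i0) k = hatSlice W k * E b i0 := by
  ext i j
  rw [Matrix.mul_apply]
  have h0 : hatSlice (lat W i0) k i j = hatSlice W k i i0 := rfl
  rw [h0]
  simp [E, mul_ite, Finset.sum_ite_eq']

lemma count_diag (x : ℝ) :
    ∑ q : Fin n1, ∑ p : Fin n2, (if (q : ℕ) = (p : ℕ) then x else 0)
      = (min n1 n2 : ℝ) * x := by
  have inner : ∀ q : Fin n1, (∑ p : Fin n2, if (q : ℕ) = (p : ℕ) then x else 0)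
      = if (q : ℕ) < n2 then x else 0 := by
    intro q
    by_cases hq : (q : ℕ) < n2
    · rw [if_pos hq, Finset.sum_eq_single (⟨(q : ℕ), hq⟩ : Fin n2)]
      · simp
      · intro p _ hne
        rw [if_neg]
        intro h
        exact hne (Fin.ext h.symm)
      · intro h
        exact absurd (Finset.mem_univ _) h
    · rw [if_neg hq]
      refine Finset.sum_eq_zero fun p _ => ?_
      rw [if_neg]
      intro h
      exact hq (h ▸ p.2)
  rw [Finset.sum_congr rfl fun q _ => inner q,
    Fin.sum_univ_eq_sum_range (fun i => if i < n2 then x else 0) n1,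
    ← Finset.sum_filter]
  have hfil : (Finset.range n1).filter (fun i => i < n2) = Finset.range (min n1 n2) := by
    ext i
    simp [Nat.lt_min]
  rw [hfil, Finset.sum_const, Finset.card_range, nsmul_eq_mul, Nat.cast_min]


lemma traceA {n m : ℕ} (p : Matrix (Fin n) (Fin 1) ℂ) (q : Matrix (Fin m) (Fin 1) ℂ)
    (hp : pᴴ * p = 1) (hq : qᴴ * q = 1) :
    ((p * qᴴ) * (p * qᴴ)ᴴ).trace = 1 := by
  have h1 : (p * qᴴ) * (p * qᴴ)ᴴ = p * (qᴴ * q) * pᴴ := by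
    rw [Matrix.conjTranspose_mul, Matrix.conjTranspose_conjTranspose,
      Matrix.mul_assoc, Matrix.mul_assoc, Matrix.mul_assoc]
  rw [h1, hq, Matrix.mul_one, Matrix.trace_mul_comm, hp, Matrix.trace_one]
  simp

lemma traceB {n m : ℕ} (u : Matrix (Fin n) (Fin n) ℂ) (sM : Matrix (Fin n) (Fin m) ℂ)
    (v : Matrix (Fin m) (Fin m) ℂ) (e1 : Matrix (Fin n) (Fin 1) ℂ)
    (e2 : Matrix (Fin m) (Fin 1) ℂ) (hu : uᴴ * u = 1) (hv : vᴴ * v = 1) :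
    ((u * sM * vᴴ) * ((u * e1) * (v * e2)ᴴ)ᴴ).trace = (e1ᴴ * (sM * e2)) 0 0 := by
  have h1 : (u * sM * vᴴ) * ((u * e1) * (v * e2)ᴴ)ᴴ
      = u * (sM * e2 * e1ᴴ) * uᴴ := by
    simp only [Matrix.conjTranspose_mul, Matrix.conjTranspose_conjTranspose,
      Matrix.mul_assoc]
    rw [← Matrix.mul_assoc vᴴ v, hv, Matrix.one_mul]
  rw [h1, trace_unitary_conj _ hu, Matrix.trace_mul_comm (sM * e2) e1ᴴ,
    trace_fin1 (e1ᴴ * (sM * e2))]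

lemma traceC {n m : ℕ} (u : Matrix (Fin n) (Fin n) ℂ) (sM : Matrix (Fin n) (Fin m) ℂ)
    (v : Matrix (Fin m) (Fin m) ℂ) (hu : uᴴ * u = 1) (hv : vᴴ * v = 1) :
    ((u * sM * vᴴ) * (u * sM * vᴴ)ᴴ).trace = (sM * sMᴴ).trace := by
  have h1 : (u * sM * vᴴ) * (u * sM * vᴴ)ᴴ = u * (sM * sMᴴ) * uᴴ := by
    simp only [Matrix.conjTranspose_mul, Matrix.conjTranspose_conjTranspose,
      Matrix.mul_assoc]
    rw [← Matrix.mul_assoc vᴴ v, hv, Matrix.one_mul]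
  rw [h1, trace_unitary_conj _ hu]

set_option maxHeartbeats 1000000 in
lemma key (hn1 : 0 < n1) (hn2 : 0 < n2) (hn3 : 0 < n3)
    {R : T3 n1 n2 n3 ℝ} {U : T3 n1 n1 n3 ℝ} {S : T3 n1 n2 n3 ℝ} {V : T3 n2 n2 n3 ℝ}
    (ht : IsOrderedTSVD R U S V) (hR : R ≠ (0 : T3 n1 n2 n3 ℝ)) :
    tInner R (leadM hn1 hn2 U S V) = tNorm (tube S ⟨0, hn1⟩ ⟨0, hn2⟩)
    ∧ tInner (leadM hn1 hn2 U S V) (leadM hn1 hn2 U S V) = 1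
    ∧ tInner R R ≤ (min n1 n2 : ℝ) * tNorm (tube S ⟨0, hn1⟩ ⟨0, hn2⟩) ^ 2 := by
  set i0 : Fin n1 := ⟨0, hn1⟩ with hi0
  set j0 : Fin n2 := ⟨0, hn2⟩ with hj0
  set ν : ℝ := tNorm (tube S i0 j0) with hν
  set M : T3 n1 n2 n3 ℝ := leadM hn1 hn2 U S V with hM
  have hn3C : (n3 : ℂ) ≠ 0 := Nat.cast_ne_zero.2 hn3.ne'
  have hn3R : (n3 : ℝ) ≠ 0 := Nat.cast_ne_zero.2 hn3.ne'
  obtain ⟨⟨hUo, hVo, hFD, hdec⟩, hord⟩ := ht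
  have hU := fun k => unitary_of_TOrth hn3 hUo k
  have hV := fun k => unitary_of_TOrth hn3 hVo k
  have hatR : ∀ k, hatSlice R k = hatSlice U k * hatSlice S k * (hatSlice V k)ᴴ := by
    intro k
    rw [hdec, hatSlice_tprod hn3, hatSlice_tprod hn3, hatSlice_tT hn3]
  -- the leading Fourier tube
  set s : Fin n3 → ℂ := fun k => hatSlice S k i0 j0 with hs
  have hs_im : ∀ k, (s k).im = 0 := fun k => ((hord k).1 i0 j0 rfl).1
  have hs_re : ∀ k, 0 ≤ (s k).re := fun k => ((hord k).1 i0 j0 rfl).2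
  -- Parseval for the tube
  have htube_hat : ∀ (k : Fin n3) (u v : Fin 1), hatSlice (tube S i0 j0) k u v = s k := by
    intro k u v; rfl
  have htube_tr : ∀ k : Fin n3,
      ((hatSlice (tube S i0 j0) k) * (hatSlice (tube S i0 j0) k)ᴴ).trace
        = s k * conj (s k) := by
    intro k
    rw [trace_mul_conjTranspose]
    simp [htube_hat]
  have hνsq : tInner (tube S i0 j0) (tube S i0 j0) = ν ^ 2 := (tNorm_sq _).symm
  have hPtube := parseval hn3 (tube S i0 j0) (tube S i0 j0)
  rw [Finset.sum_congr rfl fun k _ => htube_tr k, hνsq] at hPtube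
  -- hPtube : ∑ k, s k * conj (s k) = n3 * (ν^2 : ℝ)
  -- ν ≠ 0
  have hνnn : 0 ≤ ν := tNorm_nonneg _
  have hSzero_of : (∀ k, hatSlice S k = 0) → R = 0 := by
    intro h0
    have hPR := parseval hn3 R R
    have : ∀ k : Fin n3, (hatSlice R k * (hatSlice R k)ᴴ).trace = 0 := by
      intro k
      rw [hatR k, h0 k, Matrix.mul_zero, Matrix.zero_mul, Matrix.zero_mul, Matrix.trace_zero]
    rw [Finset.sum_congr rfl fun k _ => this k, Finset.sum_const, smul_zero] at hPR
    have hRR : (tInner R R : ℂ) = 0 :=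
      (mul_eq_zero.1 hPR.symm).resolve_left hn3C
    have : tInner R R = 0 := by exact_mod_cast hRR
    exact eq_zero_of_tInner_self R this
  have hνne : ν ≠ 0 := by
    intro h0
    apply hR
    apply hSzero_of
    have htube0 : tube S i0 j0 = 0 := by
      apply eq_zero_of_tInner_self
      have := hνsq
      rw [h0] at this
      simpa using this
    have hs0 : ∀ k, s k = 0 := by
      intro k
      have hz : ∀ m : Fin n3, S i0 j0 m = 0 := by
        intro m
        have := congrFun (congrFun (congrFun htube0 0) 0) m
        simpa [tube] using this
      show hatSlice S k i0 j0 = 0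
      unfold T3.hatSlice
      simp [hz]
    intro k
    ext q p
    by_cases hqp : (q : ℕ) = (p : ℕ)
    · have him : (hatSlice S k q p).im = 0 := ((hord k).1 q p hqp).1
      have hre0 : 0 ≤ (hatSlice S k q p).re := ((hord k).1 q p hqp).2
      have hrele : (hatSlice S k q p).re ≤ (hatSlice S k i0 j0).re :=
        (hord k).2 i0 q j0 p rfl hqp (Nat.zero_le _)
      have h00 : hatSlice S k i0 j0 = 0 := hs0 k
      rw [h00] at hrele
      simp only [Complex.zero_re] at hrele
      have : (hatSlice S k q p).re = 0 := le_antisymm hrele hre0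
      apply Complex.ext <;> simp [this, him]
    · have : ∀ m : Fin n3, S q p m = 0 := fun m => hFD q p m hqp
      unfold T3.hatSlice
      simp [this]
  set P : Fin n3 → Matrix (Fin n1) (Fin 1) ℂ := fun k => hatSlice U k * E n1 i0 with hP
  set Q : Fin n3 → Matrix (Fin n2) (Fin 1) ℂ := fun k => hatSlice V k * E n2 j0 with hQ
  have hPP : ∀ k, (P k)ᴴ * P k = 1 := by
    intro k
    simp only [hP]
    rw [Matrix.conjTranspose_mul, Matrix.mul_assoc, ← Matrix.mul_assoc (hatSlice U k)ᴴ,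
      (hU k).1, Matrix.one_mul, E_conjTranspose_E]
  have hQQ : ∀ k, (Q k)ᴴ * Q k = 1 := by
    intro k
    simp only [hQ]
    rw [Matrix.conjTranspose_mul, Matrix.mul_assoc, ← Matrix.mul_assoc (hatSlice V k)ᴴ,
      (hV k).1, Matrix.one_mul, E_conjTranspose_E]
  -- hat of M
  have hatM : ∀ k, hatSlice M k = (s k / ν) • (P k * (Q k)ᴴ) := by
    intro k
    simp only [hP, hQ]
    rw [hM]
    unfold T3.leadM
    rw [hatSlice_tprod hn3, hatSlice_tprod hn3, hatSlice_tT hn3, hat_lat, hat_lat]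
    have hmid : hatSlice (fun _ _ m => S i0 j0 m / ν) k
        = ((s k / ν) • (1 : Matrix (Fin 1) (Fin 1) ℂ)) := by
      ext u v
      have huv : u = v := Subsingleton.elim u v
      subst huv
      rw [Matrix.smul_apply, Matrix.one_apply_eq, smul_eq_mul, mul_one]
      show (∑ m : Fin n3, dftMatrix n3 k m * ((S i0 j0 m / ν : ℝ) : ℂ)) = _
      have hsk : s k = ∑ m : Fin n3, dftMatrix n3 k m * ((S i0 j0 m : ℝ) : ℂ) := rfl
      rw [hsk]
      push_cast
      rw [Finset.sum_div]
      refine Finset.sum_congr rfl fun m _ => ?_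
      rw [mul_div_assoc]
    rw [hmid]
    rw [Matrix.mul_smul, Matrix.mul_one, Matrix.smul_mul]
  -- T1 : trace (M̂ M̂ᴴ) = (s/ν) conj (s/ν)
  have Tr1 : ∀ k, (hatSlice M k * (hatSlice M k)ᴴ).trace = (s k / ν) * conj (s k / ν) := by
    intro k
    rw [hatM k, Matrix.conjTranspose_smul, Matrix.smul_mul, Matrix.mul_smul, smul_smul,
      Matrix.trace_smul, traceA (P k) (Q k) (hPP k) (hQQ k), smul_eq_mul, mul_one,
      ← starRingEnd_apply]
  -- T2 : trace (R̂ M̂ᴴ) = conj (s/ν) * s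
  have Tr2 : ∀ k, (hatSlice R k * (hatSlice M k)ᴴ).trace = conj (s k / ν) * s k := by
    intro k
    rw [hatR k, hatM k, Matrix.conjTranspose_smul, Matrix.mul_smul, Matrix.trace_smul,
      hP, hQ]
    rw [traceB (hatSlice U k) (hatSlice S k) (hatSlice V k) (E n1 i0) (E n2 j0)
      (hU k).1 (hV k).1, entry_EXE, smul_eq_mul, starRingEnd_apply]
  -- T3 : trace (R̂ R̂ᴴ) = trace (Ŝ Ŝᴴ)
  have Tr3 : ∀ k, (hatSlice R k * (hatSlice R k)ᴴ).trace
      = (hatSlice S k * (hatSlice S k)ᴴ).trace := by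
    intro k
    rw [hatR k, traceC (hatSlice U k) (hatSlice S k) (hatSlice V k) (hU k).1 (hV k).1]
  -- (1) tInner R M = ν
  have hPRM := parseval hn3 R M
  rw [Finset.sum_congr rfl fun k _ => Tr2 k] at hPRM
  have hsum2 : ∑ k : Fin n3, conj (s k / (ν : ℂ)) * s k = (n3 : ℂ) * ν := by
    have : ∀ k : Fin n3, conj (s k / (ν : ℂ)) * s k = (s k * conj (s k)) / ν := by
      intro k
      rw [map_div₀, Complex.conj_ofReal]
      ring
    rw [Finset.sum_congr rfl fun k _ => this k, ← Finset.sum_div, hPtube]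
    rw [div_eq_iff (Complex.ofReal_ne_zero.2 hνne)]
    push_cast
    ring
  have h1 : tInner R M = ν := by
    have : (n3 : ℂ) * (tInner R M : ℝ) = (n3 : ℂ) * (ν : ℝ) := by
      rw [← hPRM]
      exact hsum2
    have := mul_left_cancel₀ hn3C this
    exact_mod_cast this
  -- (2) tInner M M = 1
  have hPMM := parseval hn3 M M
  rw [Finset.sum_congr rfl fun k _ => Tr1 k] at hPMM
  have hsum1 : ∑ k : Fin n3, (s k / (ν : ℂ)) * conj (s k / (ν : ℂ)) = (n3 : ℂ) := by
    have : ∀ k : Fin n3, (s k / (ν : ℂ)) * conj (s k / (ν : ℂ))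
        = (s k * conj (s k)) / ((ν : ℂ) * ν) := by
      intro k
      rw [map_div₀, Complex.conj_ofReal]
      ring
    rw [Finset.sum_congr rfl fun k _ => this k, ← Finset.sum_div, hPtube]
    rw [div_eq_iff]
    · push_cast
      ring
    · exact mul_ne_zero (Complex.ofReal_ne_zero.2 hνne) (Complex.ofReal_ne_zero.2 hνne)
  have h2 : tInner M M = 1 := by
    have heq : (n3 : ℂ) * (tInner M M : ℝ) = (n3 : ℂ) * 1 := by
      rw [← hPMM, hsum1, mul_one]
    have := mul_left_cancel₀ hn3C heq
    exact_mod_cast this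
  -- (3)
  have hre : ∀ k, ((hatSlice S k * (hatSlice S k)ᴴ).trace).re
      = ∑ q : Fin n1, ∑ p : Fin n2, Complex.normSq (hatSlice S k q p) := by
    intro k
    rw [trace_mul_conjTranspose, Complex.re_sum]
    refine Finset.sum_congr rfl fun q _ => ?_
    rw [Complex.re_sum]
    refine Finset.sum_congr rfl fun p _ => ?_
    rw [Complex.mul_conj]
    simp
  have hbound : ∀ k, (∑ q : Fin n1, ∑ p : Fin n2, Complex.normSq (hatSlice S k q p))
      ≤ (min n1 n2 : ℝ) * Complex.normSq (s k) := by
    intro k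
    rw [← count_diag (Complex.normSq (s k))]
    refine Finset.sum_le_sum fun q _ => Finset.sum_le_sum fun p _ => ?_
    by_cases hqp : (q : ℕ) = (p : ℕ)
    · rw [if_pos hqp]
      have him : (hatSlice S k q p).im = 0 := ((hord k).1 q p hqp).1
      have hre0 : 0 ≤ (hatSlice S k q p).re := ((hord k).1 q p hqp).2
      have hrele : (hatSlice S k q p).re ≤ (s k).re :=
        (hord k).2 i0 q j0 p rfl hqp (Nat.zero_le _)
      rw [Complex.normSq_apply, Complex.normSq_apply, him, hs_im k]
      simp only [mul_zero, add_zero]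
      nlinarith [hs_re k]
    · rw [if_neg hqp]
      have : ∀ m : Fin n3, S q p m = 0 := fun m => hFD q p m hqp
      have hz : hatSlice S k q p = 0 := by
        unfold T3.hatSlice
        simp [this]
      rw [hz]
      simp
  have hSnorm : ∑ k : Fin n3, Complex.normSq (s k) = (n3 : ℝ) * ν ^ 2 := by
    have := congrArg Complex.re hPtube
    rw [Complex.re_sum] at this
    calc ∑ k : Fin n3, Complex.normSq (s k)
        = ∑ k : Fin n3, (s k * conj (s k)).re := by
          refine Finset.sum_congr rfl fun k _ => ?_
          rw [Complex.mul_conj]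
          simp
      _ = ((n3 : ℂ) * ((ν ^ 2 : ℝ) : ℂ)).re := this
      _ = (n3 : ℝ) * ν ^ 2 := by
          rw [← Complex.ofReal_natCast, ← Complex.ofReal_mul, Complex.ofReal_re]
  have hPRR := parseval hn3 R R
  have hRRre : (n3 : ℝ) * tInner R R
      = ∑ k : Fin n3, ((hatSlice S k * (hatSlice S k)ᴴ).trace).re := by
    have := congrArg Complex.re hPRR
    rw [Complex.re_sum] at this
    rw [← Complex.ofReal_natCast, ← Complex.ofReal_mul, Complex.ofReal_re] at this
    rw [← this]
    refine Finset.sum_congr rfl fun k _ => ?_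
    rw [Tr3 k]
  have h3 : tInner R R ≤ (min n1 n2 : ℝ) * ν ^ 2 := by
    have hchain : (n3 : ℝ) * tInner R R ≤ (n3 : ℝ) * ((min n1 n2 : ℝ) * ν ^ 2) := by
      rw [hRRre]
      calc ∑ k : Fin n3, ((hatSlice S k * (hatSlice S k)ᴴ).trace).re
          ≤ ∑ k : Fin n3, (min n1 n2 : ℝ) * Complex.normSq (s k) := by
            refine Finset.sum_le_sum fun k _ => ?_
            rw [hre k]
            exact hbound k
        _ = (min n1 n2 : ℝ) * ((n3 : ℝ) * ν ^ 2) := by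
            rw [← Finset.mul_sum, hSnorm]
        _ = (n3 : ℝ) * ((min n1 n2 : ℝ) * ν ^ 2) := by ring
    have hn3pos : (0 : ℝ) < n3 := by exact_mod_cast hn3
    exact le_of_mul_le_mul_left hchain hn3pos
  exact ⟨h1, h2, h3⟩

end T3Key

open T3Aux T3Aux2 T3Aux3 T3Key in
/-- Theorem 3.1, linear convergence: the residuals of the greedy scheme
satisfy `‖R_k‖_F ≤ (√(1 − 1/min(n1,n2)))^{k−1}·‖P(Y)‖_F` for all `k ≥ 1`. -/
theorem stmt_17 (n1 n2 n3 : ℕ) (hn1 : 0 < n1) (hn2 : 0 < n2)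
    (P : T3 n1 n2 n3 ℝ → T3 n1 n2 n3 ℝ) (hlin : IsLinearMap ℝ P)
    (hidem : ∀ X, P (P X) = P X)
    (hsym : ∀ X Y, tInner (P X) Y = tInner X (P Y))
    (Y : T3 n1 n2 n3 ℝ) (R : ℕ → T3 n1 n2 n3 ℝ)
    (hR1 : R 1 = P Y)
    (hfix : ∀ k, 1 ≤ k → P (R k) = R k)
    (hstep : ∀ k, 1 ≤ k →
      (R k = 0 ∧ R (k + 1) = 0) ∨
      (R k ≠ 0 ∧ ∃ (U : T3 n1 n1 n3 ℝ) (S : T3 n1 n2 n3 ℝ) (V : T3 n2 n2 n3 ℝ),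
        IsOrderedTSVD (R k) U S V ∧
        tNorm (R (k + 1)) ≤ ⨅ θ : ℝ, tNorm (R k - θ • P (leadM hn1 hn2 U S V)))) :
    ∀ k, 1 ≤ k →
      tNorm (R k) ≤ Real.sqrt (1 - 1 / (min n1 n2 : ℝ)) ^ (k - 1) * tNorm (P Y) := by
  -- projection is a contraction
  have hPle : ∀ X : T3 n1 n2 n3 ℝ, tNorm (P X) ≤ tNorm X := by
    intro X
    have h1 : tInner (P X) (P X) = tInner X (P X) := by
      have h2 := hsym X (P X)
      rw [hidem] at h2
      exact h2
    by_cases h0 : tNorm (P X) = 0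
    · rw [h0]; exact tNorm_nonneg X
    · have hCS : tInner X (P X) ≤ tNorm X * tNorm (P X) := tInner_cauchy _ _
      have hsq : tNorm (P X) ^ 2 = tInner (P X) (P X) := tNorm_sq _
      have hmul : tNorm (P X) * tNorm (P X) ≤ tNorm X * tNorm (P X) := by nlinarith
      exact le_of_mul_le_mul_right hmul (lt_of_le_of_ne (tNorm_nonneg _) (Ne.symm h0))
  have hminpos : (0 : ℝ) < (min n1 n2 : ℝ) := by
    have h1 : (0 : ℝ) < (n1 : ℝ) := by exact_mod_cast hn1
    have h2 : (0 : ℝ) < (n2 : ℝ) := by exact_mod_cast hn2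
    exact lt_min h1 h2
  have hfacnn : 0 ≤ 1 - 1 / (min n1 n2 : ℝ) := by
    have h1 : (1 : ℝ) ≤ (min n1 n2 : ℝ) := by
      have h1' : (1 : ℝ) ≤ (n1 : ℝ) := by exact_mod_cast hn1
      have h2' : (1 : ℝ) ≤ (n2 : ℝ) := by exact_mod_cast hn2
      exact le_min h1' h2'
    have := div_le_one_of_le₀ h1 (le_of_lt hminpos)
    linarith
  set f : ℝ := Real.sqrt (1 - 1 / (min n1 n2 : ℝ)) with hf
  have hfnn : 0 ≤ f := Real.sqrt_nonneg _
  -- single-step contraction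
  have hstepBound : ∀ k, 1 ≤ k → tNorm (R (k + 1)) ≤ f * tNorm (R k) := by
    intro k hk
    rcases hstep k hk with ⟨_, hz⟩ | ⟨hRk, U, S, V, htsvd, hle⟩
    · rw [hz, tNorm_zero]
      exact mul_nonneg hfnn (tNorm_nonneg _)
    · have hn3 : 0 < n3 := by
        rcases Nat.eq_zero_or_pos n3 with h0 | h
        · exfalso
          apply hRk
          funext i j m
          exact absurd m.2 (by omega)
        · exact h
      obtain ⟨h1, h2, h3⟩ := T3Key.key hn1 hn2 hn3 htsvd hRk
      set M : T3 n1 n2 n3 ℝ := leadM hn1 hn2 U S V with hMdef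
      set ν : ℝ := tNorm (tube S ⟨0, hn1⟩ ⟨0, hn2⟩) with hνdef
      have hbdd : BddBelow (Set.range fun θ : ℝ => tNorm (R k - θ • P M)) := by
        refine ⟨0, ?_⟩
        rintro x ⟨θ, rfl⟩
        exact tNorm_nonneg _
      have hinf : (⨅ θ : ℝ, tNorm (R k - θ • P M)) ≤ tNorm (R k - ν • P M) :=
        ciInf_le hbdd ν
      have hRPM : tInner (R k) (P M) = ν := by
        rw [← hsym (R k) M, hfix k hk]
        exact h1
      have hPMnorm : tInner (P M) (P M) ≤ 1 := by
        have e1 : tInner (P M) (P M) = tInner M (P M) := by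
          have := hsym M (P M)
          rw [hidem] at this
          exact this
        have e2 : tNorm M = 1 := by rw [tNorm, h2, Real.sqrt_one]
        have hCS : tInner M (P M) ≤ tNorm M * tNorm (P M) := tInner_cauchy _ _
        have e3 : tNorm (P M) ≤ tNorm M := hPle M
        rw [e1]
        calc tInner M (P M) ≤ tNorm M * tNorm (P M) := hCS
          _ = tNorm (P M) := by rw [e2, one_mul]
          _ ≤ 1 := by rw [← e2]; exact e3
      have hx : tInner (R k - ν • P M) (R k - ν • P M)
          ≤ (1 - 1 / (min n1 n2 : ℝ)) * tInner (R k) (R k) := by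
        rw [tInner_expand, hRPM]
        have hν2 : tInner (R k) (R k) / (min n1 n2 : ℝ) ≤ ν ^ 2 := by
          rw [div_le_iff₀ hminpos]
          calc tInner (R k) (R k) ≤ (min n1 n2 : ℝ) * ν ^ 2 := h3
            _ = ν ^ 2 * (min n1 n2 : ℝ) := by ring
        have hq : (1 - 1 / (min n1 n2 : ℝ)) * tInner (R k) (R k)
            = tInner (R k) (R k) - tInner (R k) (R k) / (min n1 n2 : ℝ) := by
          field_simp
        rw [hq]
        nlinarith [sq_nonneg ν, tInner_self_nonneg (R k)]
      have hxnorm : tNorm (R k - ν • P M) ≤ f * tNorm (R k) := by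
        have hd : tNorm (R k - ν • P M)
            = Real.sqrt (tInner (R k - ν • P M) (R k - ν • P M)) := rfl
        rw [hd]
        calc Real.sqrt (tInner (R k - ν • P M) (R k - ν • P M))
            ≤ Real.sqrt ((1 - 1 / (min n1 n2 : ℝ)) * tInner (R k) (R k)) :=
              Real.sqrt_le_sqrt hx
          _ = f * tNorm (R k) := by
              rw [Real.sqrt_mul hfacnn, hf, tNorm]
      exact le_trans hle (le_trans hinf hxnorm)
  intro k hk
  induction k, hk using Nat.le_induction with
  | base =>
    rw [hR1]
    norm_num
  | succ n hn ih =>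
    calc tNorm (R (n + 1)) ≤ f * tNorm (R n) := hstepBound n hn
      _ ≤ f * (f ^ (n - 1) * tNorm (P Y)) := mul_le_mul_of_nonneg_left ih hfnn
      _ = f ^ (n + 1 - 1) * tNorm (P Y) := by
          rw [← mul_assoc, ← pow_succ', Nat.sub_add_cancel hn, Nat.add_sub_cancel]
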